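/- Define a_n = Σ_{k=0}^n k! · C(n,k)^2. Then for all natural numbers n ≥ 0 and m ≥ 1, a_{n+m} ≡ a_n (mod m). -/

import Mathlib

open Finset

lemma castDesc (n k : ℕ) :
    (Nat.descFactorial n k : ℤ) = ∏ i ∈ Finset.range k, ((n : ℤ) - i) := by
  induction k with
  | zero => simp
  | succ k ih =>
    rw [Finset.prod_range_succ, ← ih, Nat.descFactorial_succ]
    rcases le_or_gt k n with h | h
    · push_cast [h]; ring
    · rw [Nat.descFactorial_of_lt h]; simp

/-- descFactorial is congruent mod m under shift by m. -/
lemma descCong (n m k : ℕ) :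
    ((Nat.descFactorial (n + m) k : ℤ) : ZMod m) = ((Nat.descFactorial n k : ℤ) : ZMod m) := by
  rw [castDesc, castDesc]
  push_cast
  simp [ZMod.natCast_self]

/-- key divisibility for k < m -/
lemma key (n m k : ℕ) (hm : 1 ≤ m) :
    (m : ℤ) ∣ (Nat.descFactorial n k : ℤ) * ((n + m).choose k - n.choose k) := by
  have hv : ((n + m).choose k : ℤ) = ∑ ij ∈ Finset.HasAntidiagonal.antidiagonal k, (n.choose ij.1 : ℤ) * m.choose ij.2 := by
    rw [Nat.add_choose_eq]; push_cast; rfl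
  have hmem : ((k, 0) : ℕ × ℕ) ∈ Finset.HasAntidiagonal.antidiagonal k := by simp
  have hsplit := Finset.sum_erase_add (Finset.HasAntidiagonal.antidiagonal k)
    (fun ij => (n.choose ij.1 : ℤ) * m.choose ij.2) hmem
  have h2 : ((n + m).choose k : ℤ) - n.choose k
      = ∑ ij ∈ (Finset.HasAntidiagonal.antidiagonal k).erase (k, 0), (n.choose ij.1 : ℤ) * m.choose ij.2 := by
    rw [hv, ← hsplit]; simp
  rw [h2, Finset.mul_sum]
  refine Finset.dvd_sum fun ij hij => ?_
  obtain ⟨i, j⟩ := ij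
  have hne := Finset.ne_of_mem_erase hij
  have hij' : i + j = k := by
    have := Finset.mem_of_mem_erase hij
    simpa [Finset.mem_antidiagonal] using this
  have hj : 1 ≤ j := by
    rcases Nat.eq_zero_or_pos j with h0 | h0
    · exact absurd (by simp [h0, ← hij']) hne
    · exact h0
  have hjk : j ≤ k := le_of_le_of_eq (Nat.le_add_left j i) hij'
  have h1 : (Nat.factorial j : ℕ) ∣ Nat.descFactorial n k :=
    (Nat.factorial_dvd_factorial hjk).trans (Nat.factorial_dvd_descFactorial n k)
  obtain ⟨c, hc⟩ := h1
  have h3 : m ∣ Nat.descFactorial m j := by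
    obtain ⟨m', rfl⟩ := Nat.exists_eq_add_of_le hm
    obtain ⟨j', rfl⟩ := Nat.exists_eq_add_of_le hj
    rw [add_comm 1 m', add_comm 1 j', Nat.succ_descFactorial_succ]
    exact Dvd.intro _ rfl
  have h4 : m ∣ Nat.descFactorial n k * Nat.choose m j := by
    have he : Nat.descFactorial n k * Nat.choose m j = c * Nat.descFactorial m j := by
      rw [Nat.descFactorial_eq_factorial_mul_choose m j, hc]; ring
    rw [he]; exact h3.mul_left c
  have h5 : (m : ℤ) ∣ (Nat.descFactorial n k : ℤ) * Nat.choose m j := by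
    exact_mod_cast Int.natCast_dvd_natCast.mpr h4
  calc (m : ℤ) ∣ (Nat.descFactorial n k : ℤ) * Nat.choose m j := h5
    _ ∣ (Nat.descFactorial n k : ℤ) * ((n.choose i : ℤ) * m.choose j) := ⟨n.choose i, by ring⟩

lemma term_dvd (n m k : ℕ) (hm : 1 ≤ m) :
    (m : ℤ) ∣ (Nat.factorial k : ℤ) * ((n + m).choose k) ^ 2
      - (Nat.factorial k : ℤ) * (n.choose k) ^ 2 := by
  rcases lt_or_ge k m with hk | hk
  · have hfac : ∀ N : ℕ, (Nat.factorial k : ℤ) * (N.choose k) ^ 2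
        = (Nat.descFactorial N k : ℤ) * N.choose k := by
      intro N
      have := Nat.descFactorial_eq_factorial_mul_choose N k
      have h := congrArg (fun x : ℕ => (x : ℤ)) this
      push_cast at h
      rw [pow_two, ← mul_assoc, ← h]
    rw [hfac, hfac]
    have hD : (m : ℤ) ∣ (Nat.descFactorial (n + m) k : ℤ) - Nat.descFactorial n k := by
      have := (ZMod.intCast_eq_intCast_iff _ _ _).mp (descCong n m k)
      exact (Int.ModEq.dvd this.symm)
    have hK := key n m k hm
    have hexp : (Nat.descFactorial (n+m) k : ℤ) * ((n + m).choose k)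
        - (Nat.descFactorial n k : ℤ) * (n.choose k)
        = ((Nat.descFactorial (n+m) k : ℤ) - Nat.descFactorial n k) * ((n + m).choose k)
          + (Nat.descFactorial n k : ℤ) * (((n + m).choose k : ℤ) - n.choose k) := by ring
    rw [hexp]
    exact dvd_add (hD.mul_right _) hK
  · have h : (m : ℤ) ∣ (Nat.factorial k : ℤ) :=
      Int.natCast_dvd_natCast.mpr (Nat.dvd_factorial hm hk)
    exact dvd_sub ((h.mul_right _)) (h.mul_right _)

theorem stmt_18 (n m : ℕ) (hm : 1 ≤ m) :
    (∑ k ∈ Finset.range (n + m + 1), (Nat.factorial k : ℤ) * ((n + m).choose k) ^ 2)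
      ≡ (∑ k ∈ Finset.range (n + 1), (Nat.factorial k : ℤ) * (n.choose k) ^ 2) [ZMOD m] := by
  have hext : (∑ k ∈ Finset.range (n + 1), (Nat.factorial k : ℤ) * (n.choose k) ^ 2)
      = ∑ k ∈ Finset.range (n + m + 1), (Nat.factorial k : ℤ) * (n.choose k) ^ 2 := by
    refine Finset.sum_subset (Finset.range_subset_range.mpr (by omega)) fun x _ hx => ?_
    have : n < x := by simpa using hx
    rw [Nat.choose_eq_zero_of_lt this]
    simp
  rw [hext]
  refine Int.ModEq.symm (Int.modEq_iff_dvd.mpr ?_)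
  rw [← Finset.sum_sub_distrib]
  exact Finset.dvd_sum fun k _ => term_dvd n m k hm
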